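/- Work in the coordinate model with smooth Hamiltonian H(x^i,u^α,p^i_α), closed 1-form θ = θ_i(x)dx^i on ℝ^m, and (Ω_θ)_h = Ω_h + θ∧Θ_h. A smooth section φ(x) = (x^i, φ^α(x), φ^i_α(x)) of J¹π* → ℝ^m satisfies φ*(ι_X (Ω_θ)_h) = 0 for every smooth vector field X on J¹π* if and only if φ satisfies the locally conformal Hamilton–De Donder–Weyl equations: ∂φ^α/∂x^i = (∂H/∂p^i_α)∘φ for all i, α, and Σ_i ∂φ^i_α/∂x^i = −(∂H/∂u^α)∘φ + θ_i φ^i_α for all α. -/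

import Mathlib

open scoped BigOperators

noncomputable section

/-- A raw `k`-cochain on `E`: a scalar function of a point and `k` tangent vectors.
Smooth differential `k`-forms are regarded as such cochains by evaluation. -/
abbrev Coch (E : Type) (k : ℕ) : Type := E → (Fin k → E) → ℝ

/-- The (componentwise) exterior derivative of a `k`-cochain:
`(dω)(x)(v₀,…,v_k) = ∑ⱼ (-1)ʲ ∂_{vⱼ}(y ↦ ω(y)(v₀,…,v̂ⱼ,…,v_k))(x)`. -/
noncomputable def extDer {E : Type} [NormedAddCommGroup E] [NormedSpace ℝ E] {k : ℕ}
    (ω : Coch E k) : Coch E (k + 1) := fun x v =>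
  ∑ j : Fin (k + 1),
    (-1 : ℝ) ^ (j : ℕ) * fderiv ℝ (fun y => ω y (v ∘ j.succAbove)) x (v j)

/-- Wedge product of a 1-cochain with a `k`-cochain:
`(θ∧ω)(x)(v₀,…,v_k) = ∑ⱼ (-1)ʲ θ(x)(vⱼ) ω(x)(v₀,…,v̂ⱼ,…,v_k)`. -/
def wedge1 {E : Type} {k : ℕ} (θ : Coch E 1) (ω : Coch E k) : Coch E (k + 1) := fun x v =>
  ∑ j : Fin (k + 1), (-1 : ℝ) ^ (j : ℕ) * θ x (fun _ => v j) * ω x (v ∘ j.succAbove)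

/-- Interior product (contraction) of a cochain with a vector field. -/
def iotaV {E : Type} {k : ℕ} (X : E → E) (ω : Coch E (k + 1)) : Coch E k := fun x v =>
  ω x (Fin.cons (X x) v)

/-- Pullback of a cochain along a (smooth) map. -/
noncomputable def pullC {E F : Type} [NormedAddCommGroup E] [NormedSpace ℝ E]
    [NormedAddCommGroup F] [NormedSpace ℝ F] {k : ℕ}
    (f : F → E) (ω : Coch E k) : Coch F k := fun x v =>
  ω (f x) fun a => fderiv ℝ f x (v a)

/-- The differential of a function, as a 1-cochain. -/
noncomputable def dFun {E : Type} [NormedAddCommGroup E] [NormedSpace ℝ E]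
    (H : E → ℝ) : Coch E 1 := fun q v => fderiv ℝ H q (v 0)

/-! ## The coordinate model of first-order Hamiltonian field theory

The base is `ℝ^m` with coordinates `xⁱ`, the configuration bundle is `E = ℝ^m × ℝ^N` with
fibre coordinates `u^α`, and the reduced multimomentum bundle is
`J¹π* = ℝ^m × ℝ^N × ℝ^{mN}` with coordinates `(xⁱ, u^α, pⁱ_α)`. -/

/-- `J¹π* = ℝ^m × ℝ^N × ℝ^{mN}` in coordinates `(xⁱ, u^α, pⁱ_α)`. -/
abbrev Jb (m N : ℕ) : Type := (Fin m → ℝ) × (Fin N → ℝ) × (Fin m → Fin N → ℝ)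

/-- The coordinate volume form `d_mx = dx¹∧⋯∧dx^m` on `J¹π*`. -/
def dmxJ (m N : ℕ) : Coch (Jb m N) m := fun _ v => Matrix.det (Matrix.of fun a b => (v b).1 a)

/-- The coordinate 1-form `du^α` on `J¹π*`. -/
def duJ (m N : ℕ) (α : Fin N) : Coch (Jb m N) 1 := fun _ v => (v 0).2.1 α

/-- The coordinate 1-form `dpⁱ_α` on `J¹π*`. -/
def dpJ (m N : ℕ) (i : Fin m) (α : Fin N) : Coch (Jb m N) 1 := fun _ v => (v 0).2.2 i α

/-- The coordinate vector `∂/∂xⁱ` on `J¹π*`. -/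
def XdirJ (m N : ℕ) (i : Fin m) : Jb m N := (Pi.single i 1, 0, 0)

/-- The coordinate vector `∂/∂u^α` on `J¹π*`. -/
def UdirJ (m N : ℕ) (α : Fin N) : Jb m N := (0, Pi.single α 1, 0)

/-- The coordinate vector `∂/∂pⁱ_α` on `J¹π*`. -/
def PdirJ (m N : ℕ) (i : Fin m) (α : Fin N) : Jb m N := (0, 0, Pi.single i (Pi.single α 1))

/-- The `m`-form `du^α ∧ (∂_i ⌟ d_mx) = -(∂_i ⌟ (du^α ∧ d_mx))` on `J¹π*`. -/
def duContr (m N : ℕ) (α : Fin N) (i : Fin m) : Coch (Jb m N) m := fun q v =>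
  -(iotaV (fun _ => XdirJ m N i) (wedge1 (duJ m N α) (dmxJ m N)) q v)

/-- The Hamiltonian `(m+1)`-form `Ω_h = dH∧d_mx − dpⁱ_α∧du^α∧(∂_i⌟d_mx)` on `J¹π*`. -/
noncomputable def OmegaH (m N : ℕ) (H : Jb m N → ℝ) : Coch (Jb m N) (m + 1) := fun q v =>
  wedge1 (dFun H) (dmxJ m N) q v -
    ∑ i : Fin m, ∑ α : Fin N, wedge1 (dpJ m N i α) (duContr m N α i) q v

/-- The `m`-form `Θ_h = −H d_mx + pⁱ_α du^α∧(∂_i⌟d_mx)` on `J¹π*`. -/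
noncomputable def ThetaHc (m N : ℕ) (H : Jb m N → ℝ) : Coch (Jb m N) m := fun q v =>
  -(H q) * dmxJ m N q v + ∑ i : Fin m, ∑ α : Fin N, q.2.2 i α * duContr m N α i q v

/-- The pullback to `J¹π*` of the 1-form `ϑ = ϑ_i(x) dxⁱ` on the base. -/
def thJ (m N : ℕ) (ϑ : (Fin m → ℝ) → Fin m → ℝ) : Coch (Jb m N) 1 := fun q v =>
  ∑ i : Fin m, ϑ q.1 i * (v 0).1 i

/-- The locally conformal Hamiltonian `(m+1)`-form `(Ω_θ)_h = Ω_h + θ∧Θ_h` on `J¹π*`. -/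
noncomputable def OmegaThH (m N : ℕ) (H : Jb m N → ℝ) (ϑ : (Fin m → ℝ) → Fin m → ℝ) :
    Coch (Jb m N) (m + 1) := fun q v =>
  OmegaH m N H q v + wedge1 (thJ m N ϑ) (ThetaHc m N H) q v

/-- The section `φ(x) = (x, φ^α(x), φⁱ_α(x))` of `J¹π* → ℝ^m`. -/
def secJ (m N : ℕ) (φ : (Fin m → ℝ) → Fin N → ℝ) (P : (Fin m → ℝ) → Fin m → Fin N → ℝ) :
    (Fin m → ℝ) → Jb m N := fun x => (x, φ x, P x)

/-- Closedness of the 1-form `ϑ_i(x) dxⁱ` on `ℝ^m`, in coordinates. -/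
def ClosedOneForm (m : ℕ) (ϑ : (Fin m → ℝ) → Fin m → ℝ) : Prop :=
  ∀ (x : Fin m → ℝ) (i j : Fin m),
    fderiv ℝ (fun y => ϑ y i) x (Pi.single j 1) = fderiv ℝ (fun y => ϑ y j) x (Pi.single i 1)

/-- The Hamilton–De Donder–Weyl equations in coordinates:
`∂φ^α/∂xⁱ = ∂H/∂pⁱ_α ∘ φ` and `∑ᵢ ∂φⁱ_α/∂xⁱ = −∂H/∂u^α ∘ φ`. -/
def HDWeq (m N : ℕ) (H : Jb m N → ℝ) (φ : (Fin m → ℝ) → Fin N → ℝ)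
    (P : (Fin m → ℝ) → Fin m → Fin N → ℝ) : Prop :=
  (∀ (x : Fin m → ℝ) (i : Fin m) (α : Fin N),
      fderiv ℝ φ x (Pi.single i 1) α = fderiv ℝ H (secJ m N φ P x) (PdirJ m N i α)) ∧
  (∀ (x : Fin m → ℝ) (α : Fin N),
      (∑ i : Fin m, fderiv ℝ P x (Pi.single i 1) i α) =
        -(fderiv ℝ H (secJ m N φ P x) (UdirJ m N α)))

/-- The locally conformal Hamilton–De Donder–Weyl equations in coordinates:
`∂φ^α/∂xⁱ = ∂H/∂pⁱ_α ∘ φ` and `∑ᵢ ∂φⁱ_α/∂xⁱ = −∂H/∂u^α ∘ φ + ϑ_i φⁱ_α`. -/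
def lcHDWeq (m N : ℕ) (H : Jb m N → ℝ) (ϑ : (Fin m → ℝ) → Fin m → ℝ)
    (φ : (Fin m → ℝ) → Fin N → ℝ) (P : (Fin m → ℝ) → Fin m → Fin N → ℝ) : Prop :=
  (∀ (x : Fin m → ℝ) (i : Fin m) (α : Fin N),
      fderiv ℝ φ x (Pi.single i 1) α = fderiv ℝ H (secJ m N φ P x) (PdirJ m N i α)) ∧
  (∀ (x : Fin m → ℝ) (α : Fin N),
      (∑ i : Fin m, fderiv ℝ P x (Pi.single i 1) i α) =
        -(fderiv ℝ H (secJ m N φ P x) (UdirJ m N α)) + ∑ i : Fin m, ϑ x i * P x i α)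


namespace LCHDW

variable {m N : ℕ}

lemma det_blocktri {k : ℕ} (M : Matrix (Fin (k+1)) (Fin (k+1)) ℝ)
    (h : ∀ a : Fin k, M a.succ 0 = 0) :
    M.det = M 0 0 * (M.submatrix Fin.succ Fin.succ).det := by
  rw [Matrix.det_succ_column_zero, Fin.sum_univ_succ]
  have h0 : (0 : Fin (k+1)).succAbove = Fin.succ := by
    funext i; exact Fin.zero_succAbove i
  simp [h, h0]

lemma det_two_entries {k : ℕ} (i : Fin k) (M : Matrix (Fin (k+1)) (Fin (k+1)) ℝ)
    (h : ∀ a : Fin k, a ≠ i → M a.succ 0 = 0) :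
    M.det = M 0 0 * (M.submatrix Fin.succ Fin.succ).det
      + (-1 : ℝ)^((i : ℕ)+1) * M i.succ 0 * (M.submatrix i.succ.succAbove Fin.succ).det := by
  rw [Matrix.det_succ_column_zero, Fin.sum_univ_succ]
  have h0 : (0 : Fin (k+1)).succAbove = Fin.succ := by
    funext i; exact Fin.zero_succAbove i
  rw [h0]
  simp only [pow_zero, one_mul, Fin.val_zero]
  congr 1
  rw [Finset.sum_eq_single i]
  · simp [Fin.val_succ]
  · intro b _ hb; simp [h b hb]
  · simp

lemma det_row_replace {k : ℕ} (i : Fin k) (g : Fin k → ℝ)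
    (M : Matrix (Fin k) (Fin k) ℝ)
    (h0 : ∀ b, M i b = g b)
    (h1 : ∀ a b, a ≠ i → M a b = if a = b then 1 else 0) : M.det = g i := by
  obtain ⟨n, rfl⟩ : ∃ n, k = n + 1 := ⟨k - 1, by have := i.pos; omega⟩
  rw [Matrix.det_succ_row M i, Finset.sum_eq_single i]
  · have hsub : M.submatrix i.succAbove i.succAbove = 1 := by
      ext r s
      rw [Matrix.submatrix_apply, h1 _ _ (Fin.succAbove_ne i r), Matrix.one_apply]
      simp [Fin.succAbove_right_injective.eq_iff]
    rw [hsub, Matrix.det_one, h0]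
    have : Even ((i : ℕ) + (i : ℕ)) := ⟨i, rfl⟩
    rw [this.neg_one_pow]; ring
  · intro j _ hj
    obtain ⟨s, hs⟩ := Fin.exists_succAbove_eq (Ne.symm hj)
    have : (M.submatrix i.succAbove j.succAbove).det = 0 := by
      apply Matrix.det_eq_zero_of_column_eq_zero s
      intro r
      rw [Matrix.submatrix_apply, h1 _ _ (Fin.succAbove_ne i r), hs]
      simp [(Fin.succAbove_ne i r)]
    rw [this]; ring
  · simp

lemma det_top_row {n : ℕ} (i : Fin (n+1)) (g : Fin (n+1) → ℝ)
    (M : Matrix (Fin (n+1)) (Fin (n+1)) ℝ)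
    (h0 : ∀ b, M 0 b = g b)
    (h1 : ∀ (r : Fin n) b, M r.succ b = if i.succAbove r = b then 1 else 0) :
    M.det = (-1 : ℝ)^(i : ℕ) * g i := by
  rw [Matrix.det_succ_column M i, Fin.sum_univ_succ]
  have hz : ∀ r : Fin n, M r.succ i = 0 := by
    intro r; rw [h1]; simp [Fin.succAbove_ne i r]
  have hsub : M.submatrix (Fin.succAbove 0) i.succAbove = 1 := by
    ext r s
    rw [Matrix.submatrix_apply, Fin.zero_succAbove, h1, Matrix.one_apply]
    simp [Fin.succAbove_right_injective.eq_iff, eq_comm]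
  rw [hsub]
  simp [hz, h0]


def projX (m N : ℕ) : Jb m N →ₗ[ℝ] (Fin m → ℝ) := LinearMap.fst ℝ _ _

def repL (i : Fin m) (α : Fin N) : Jb m N →ₗ[ℝ] (Fin m → ℝ) where
  toFun z := fun a => if a = i then z.2.1 α else z.1 a
  map_add' x y := by funext a; by_cases h : a = i <;> simp [h]
  map_smul' c x := by funext a; by_cases h : a = i <;> simp [h]

def prep {k : ℕ} (L : Jb m N →ₗ[ℝ] ℝ) (Λ : Jb m N →ₗ[ℝ] (Fin k → ℝ)) :
    Jb m N →ₗ[ℝ] (Fin (k+1) → ℝ) where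
  toFun z := Fin.cons (L z) (Λ z)
  map_add' x y := by
    funext a; refine Fin.cases ?_ ?_ a <;> simp
  map_smul' c x := by
    funext a; refine Fin.cases ?_ ?_ a <;> simp

lemma wedge_det (L : Jb m N →ₗ[ℝ] ℝ) (Λ : Jb m N →ₗ[ℝ] (Fin m → ℝ)) (v : Fin (m+1) → Jb m N) :
    ∑ j : Fin (m+1), (-1:ℝ)^(j:ℕ) * L (v j) *
        Matrix.det (Matrix.of fun a b => Λ (v (j.succAbove b)) a)
      = Matrix.det (Matrix.of fun a b => prep L Λ (v b) a) := by
  rw [Matrix.det_succ_row_zero]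
  apply Finset.sum_congr rfl
  intro j _
  have h1 : (Matrix.of fun a b => prep L Λ (v b) a) 0 j = L (v j) := rfl
  have h2 : ((Matrix.of fun a b => prep L Λ (v b) a).submatrix Fin.succ j.succAbove)
      = Matrix.of fun a b => Λ (v (j.succAbove b)) a := by
    ext a b; simp [prep, Matrix.submatrix_apply]
  rw [h1, h2]

lemma duContr_eq (i : Fin m) (α : Fin N) (q : Jb m N) (v : Fin m → Jb m N) :
    duContr m N α i q v = Matrix.det (Matrix.of fun a b => repL i α (v b) a) := by
  obtain ⟨n, rfl⟩ : ∃ n, m = n + 1 := ⟨m - 1, by have := i.pos; omega⟩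
  unfold duContr iotaV wedge1 duJ dmxJ
  rw [Fin.sum_univ_succ]
  simp only [Fin.cons_zero, Fin.cons_succ]
  have hx : (XdirJ (n+1) N i).2.1 α = 0 := rfl
  simp only [hx, mul_zero, zero_mul, zero_add]
  rw [Matrix.det_succ_row (Matrix.of fun a b => (repL i α) (v b) a) i,
    ← Finset.sum_neg_distrib]
  apply Finset.sum_congr rfl
  intro k _
  have hMdet : (Matrix.of fun a b =>
        ((Fin.cons (XdirJ (n+1) N i) v ∘ k.succ.succAbove) b).1 a).det
      = (-1:ℝ)^(i:ℕ) *
        ((Matrix.of fun a b => (repL i α) (v b) a).submatrix i.succAbove k.succAbove).det := by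
    rw [Matrix.det_succ_column_zero, Finset.sum_eq_single i]
    · have e1 : (Matrix.of fun a b =>
          ((Fin.cons (XdirJ (n+1) N i) v ∘ k.succ.succAbove) b).1 a) i 0 = 1 := by
        simp [Fin.succ_succAbove_zero, XdirJ]
      have e2 : ((Matrix.of fun a b =>
            ((Fin.cons (XdirJ (n+1) N i) v ∘ k.succ.succAbove) b).1 a).submatrix
              i.succAbove Fin.succ)
          = (Matrix.of fun a b => (repL i α) (v b) a).submatrix i.succAbove k.succAbove := by
        ext r s
        simp [Fin.succ_succAbove_succ, repL, Fin.succAbove_ne, Matrix.submatrix_apply]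
      rw [e1, e2, mul_one]
    · intro b _ hb
      have : (Matrix.of fun a b =>
          ((Fin.cons (XdirJ (n+1) N i) v ∘ k.succ.succAbove) b).1 a) b 0 = 0 := by
        simp [Fin.succ_succAbove_zero, XdirJ, Pi.single_apply, hb]
      rw [this]; ring
    · simp
  rw [hMdet]
  have e3 : ((Matrix.of fun a b => (repL i α) (v b) a)) i k = (v k).2.1 α := by
    simp [repL]
  rw [e3]
  simp only [Fin.val_succ, pow_add, pow_succ, pow_zero]
  ring

def dpL (i : Fin m) (α : Fin N) : Jb m N →ₗ[ℝ] ℝ where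
  toFun z := z.2.2 i α
  map_add' x y := rfl
  map_smul' c x := rfl

def thL (c : Fin m → ℝ) : Jb m N →ₗ[ℝ] ℝ where
  toFun z := ∑ r, c r * z.1 r
  map_add' x y := by simp [mul_add, Finset.sum_add_distrib]
  map_smul' t x := by
    simp only [Finset.mul_sum, RingHom.id_apply, Prod.smul_fst, Pi.smul_apply, smul_eq_mul]
    exact Finset.sum_congr rfl fun i _ => by ring

private lemma rearr (T A : Fin (m+1) → ℝ) (B : Fin (m+1) → Fin m → Fin N → ℝ)
    (c : ℝ) (p : Fin m → Fin N → ℝ) :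
    (∑ j : Fin (m+1), (-1:ℝ)^(j:ℕ) * T j * (c * A j + ∑ i, ∑ α, p i α * B j i α))
    = c * (∑ j : Fin (m+1), (-1:ℝ)^(j:ℕ) * T j * A j)
      + ∑ i, ∑ α, p i α * ∑ j : Fin (m+1), (-1:ℝ)^(j:ℕ) * T j * B j i α := by
  have h1 : ∀ j : Fin (m+1), (-1:ℝ)^(j:ℕ) * T j * (c * A j + ∑ i, ∑ α, p i α * B j i α)
      = c * ((-1:ℝ)^(j:ℕ) * T j * A j)
        + ∑ i, ∑ α, p i α * ((-1:ℝ)^(j:ℕ) * T j * B j i α) := by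
    intro j
    rw [mul_add]
    congr 1
    · ring
    · rw [Finset.mul_sum]
      apply Finset.sum_congr rfl; intro i _
      rw [Finset.mul_sum]
      apply Finset.sum_congr rfl; intro β _
      ring
  rw [Finset.sum_congr rfl (fun j _ => h1 j), Finset.sum_add_distrib, ← Finset.mul_sum]
  congr 1
  rw [Finset.sum_comm]
  apply Finset.sum_congr rfl; intro i _
  rw [Finset.sum_comm]
  apply Finset.sum_congr rfl; intro β _
  rw [← Finset.mul_sum]

lemma omega_repr (H : Jb m N → ℝ) (ϑ : (Fin m → ℝ) → Fin m → ℝ)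
    (q : Jb m N) (v : Fin (m+1) → Jb m N) :
    OmegaThH m N H ϑ q v =
      Matrix.det (Matrix.of fun a b =>
          prep ((fderiv ℝ H q : Jb m N →L[ℝ] ℝ) : Jb m N →ₗ[ℝ] ℝ) (projX m N) (v b) a)
      - (∑ i, ∑ α, Matrix.det (Matrix.of fun a b => prep (dpL i α) (repL i α) (v b) a))
      + (-(H q)) * Matrix.det (Matrix.of fun a b => prep (thL (ϑ q.1)) (projX m N) (v b) a)
      + ∑ i, ∑ α, q.2.2 i α *
          Matrix.det (Matrix.of fun a b => prep (thL (ϑ q.1)) (repL i α) (v b) a) := by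
  unfold OmegaThH OmegaH
  have hA : wedge1 (dFun H) (dmxJ m N) q v
      = Matrix.det (Matrix.of fun a b =>
          prep ((fderiv ℝ H q : Jb m N →L[ℝ] ℝ) : Jb m N →ₗ[ℝ] ℝ) (projX m N) (v b) a) := by
    rw [← wedge_det]; rfl
  have hB : ∀ (i : Fin m) (α : Fin N), wedge1 (dpJ m N i α) (duContr m N α i) q v
      = Matrix.det (Matrix.of fun a b => prep (dpL i α) (repL i α) (v b) a) := by
    intro i α
    rw [← wedge_det]
    unfold wedge1
    apply Finset.sum_congr rfl; intro j _
    rw [duContr_eq]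
    rfl
  have hC : wedge1 (thJ m N ϑ) (ThetaHc m N H) q v
      = (-(H q)) * Matrix.det (Matrix.of fun a b => prep (thL (ϑ q.1)) (projX m N) (v b) a)
        + ∑ i, ∑ α, q.2.2 i α *
            Matrix.det (Matrix.of fun a b => prep (thL (ϑ q.1)) (repL i α) (v b) a) := by
    unfold wedge1 ThetaHc
    have step : ∀ j : Fin (m+1),
        (-1:ℝ)^(j:ℕ) * thJ m N ϑ q (fun _ => v j) * ((-(H q)) * dmxJ m N q (v ∘ j.succAbove)
            + ∑ i, ∑ α, q.2.2 i α * duContr m N α i q (v ∘ j.succAbove))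
        = (-1:ℝ)^(j:ℕ) * thL (ϑ q.1) (v j) * ((-(H q)) *
              Matrix.det (Matrix.of fun a b => projX m N (v (j.succAbove b)) a)
            + ∑ i, ∑ α, q.2.2 i α *
              Matrix.det (Matrix.of fun a b => repL i α (v (j.succAbove b)) a)) := by
      intro j
      have hd : ∀ (i : Fin m) (β : Fin N), duContr m N β i q (v ∘ j.succAbove)
          = Matrix.det (Matrix.of fun a b => repL i β (v (j.succAbove b)) a) := by
        intro i β; rw [duContr_eq]; rfl
      simp only [hd]
      rfl
    rw [Finset.sum_congr rfl (fun j _ => step j), rearr]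
    congr 1
    · congr 1
      exact wedge_det (thL (ϑ q.1)) (projX m N) v
    · apply Finset.sum_congr rfl; intro i _
      apply Finset.sum_congr rfl; intro β _
      congr 1
      exact wedge_det (thL (ϑ q.1)) (repL i β) v
  rw [hA, hC, Finset.sum_congr rfl (fun i _ => Finset.sum_congr rfl (fun β _ => hB i β))]
  ring

@[simp] lemma prep_zero {k : ℕ} (L : Jb m N →ₗ[ℝ] ℝ) (Λ : Jb m N →ₗ[ℝ] (Fin k → ℝ))
    (z : Jb m N) : prep L Λ z 0 = L z := rfl
@[simp] lemma prep_succ {k : ℕ} (L : Jb m N →ₗ[ℝ] ℝ) (Λ : Jb m N →ₗ[ℝ] (Fin k → ℝ))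
    (z : Jb m N) (a : Fin k) : prep L Λ z a.succ = Λ z a := rfl
lemma repL_apply (i : Fin m) (α : Fin N) (z : Jb m N) (a : Fin m) :
    repL i α z a = if a = i then z.2.1 α else z.1 a := rfl
lemma projX_apply (z : Jb m N) : projX m N z = z.1 := rfl
lemma dpL_apply (i : Fin m) (α : Fin N) (z : Jb m N) : dpL i α z = z.2.2 i α := rfl
lemma thL_apply (c : Fin m → ℝ) (z : Jb m N) : thL c z = ∑ r, c r * z.1 r := rfl

lemma neg_pow_succ_mul (i : ℕ) : (-1:ℝ)^(i+1) * (-1:ℝ)^i = -1 := by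
  rw [pow_succ]
  have h : (-1:ℝ)^i * (-1:ℝ)^i = 1 := by
    rw [← pow_add]; exact Even.neg_one_pow ⟨i, rfl⟩
  nlinarith [h]

lemma omega_eval (H : Jb m N → ℝ) (ϑ : (Fin m → ℝ) → Fin m → ℝ)
    (q : Jb m N) (w : Jb m N) (hw : w.1 = 0)
    (V : Fin m → Jb m N) (hV : ∀ b, (V b).1 = Pi.single b 1) :
    OmegaThH m N H ϑ q (Fin.cons w V) =
      fderiv ℝ H q w
      - (∑ i, ∑ α, (w.2.2 i α * (V i).2.1 α - w.2.1 α * (V i).2.2 i α))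
      - ∑ i, ∑ α, q.2.2 i α * w.2.1 α * ϑ q.1 i := by
  rw [omega_repr]
  set T : Fin (m+1) → Jb m N := Fin.cons w V with hT
  have hT0 : T 0 = w := rfl
  have hTs : ∀ b : Fin m, T b.succ = V b := fun b => rfl
  have hA : Matrix.det (Matrix.of fun a b =>
      prep ((fderiv ℝ H q : Jb m N →L[ℝ] ℝ) : Jb m N →ₗ[ℝ] ℝ) (projX m N) (T b) a)
      = fderiv ℝ H q w := by
    rw [det_blocktri]
    · have hsub : ((Matrix.of fun a b =>
          prep ((fderiv ℝ H q : Jb m N →L[ℝ] ℝ) : Jb m N →ₗ[ℝ] ℝ) (projX m N) (T b) a).submatrix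
            Fin.succ Fin.succ) = 1 := by
        ext a b
        simp [Matrix.submatrix_apply, hTs, projX_apply, hV, Pi.single_apply, Matrix.one_apply,
          eq_comm]
      rw [hsub, Matrix.det_one]
      simp [hT0]
    · intro a
      simp [hT0, projX_apply, hw]
  have hB : ∀ (i : Fin m) (α : Fin N), Matrix.det (Matrix.of fun a b =>
      prep (dpL i α) (repL i α) (T b) a)
      = w.2.2 i α * (V i).2.1 α - w.2.1 α * (V i).2.2 i α := by
    intro i α
    rw [det_two_entries i]
    · have h00 : (Matrix.of fun a b => prep (dpL i α) (repL i α) (T b) a) 0 0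
          = w.2.2 i α := rfl
      have hsub1 : (((Matrix.of fun a b => prep (dpL i α) (repL i α) (T b) a)).submatrix
          Fin.succ Fin.succ).det = (V i).2.1 α := by
        apply det_row_replace i (fun b => (V b).2.1 α)
        · intro b
          simp [Matrix.submatrix_apply, hTs, repL_apply]
        · intro a b hai
          simp [Matrix.submatrix_apply, hTs, repL_apply, hai, hV, Pi.single_apply, eq_comm]
      have hi0 : (Matrix.of fun a b => prep (dpL i α) (repL i α) (T b) a) i.succ 0
          = w.2.1 α := by
        simp [hT0, repL_apply]
      have hsub2 : (((Matrix.of fun a b => prep (dpL i α) (repL i α) (T b) a)).submatrix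
          i.succ.succAbove Fin.succ).det = (-1:ℝ)^(i:ℕ) * (V i).2.2 i α := by
        obtain ⟨n, rfl⟩ : ∃ n, m = n + 1 := ⟨m - 1, by have := i.pos; omega⟩
        apply det_top_row i (fun b => (V b).2.2 i α)
        · intro b
          simp [Matrix.submatrix_apply, Fin.succ_succAbove_zero, hTs, dpL_apply]
        · intro r b
          have hsa : i.succ.succAbove r.succ = (i.succAbove r).succ := Fin.succ_succAbove_succ i r
          simp [Matrix.submatrix_apply, hsa, hTs, repL_apply, Fin.succAbove_ne i r, hV,
            Pi.single_apply]
      rw [h00, hsub1, hi0, hsub2]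
      have hnp := neg_pow_succ_mul (i : ℕ)
      have hre : (-1:ℝ)^((i:ℕ)+1) * w.2.1 α * ((-1:ℝ)^(i:ℕ) * (V i).2.2 i α)
          = ((-1:ℝ)^((i:ℕ)+1) * (-1:ℝ)^(i:ℕ)) * (w.2.1 α * (V i).2.2 i α) := by ring
      rw [hre, hnp]; ring
    · intro a hai
      simp [hT0, repL_apply, hai, hw]
  have hC : Matrix.det (Matrix.of fun a b =>
      prep (thL (ϑ q.1)) (projX m N) (T b) a) = 0 := by
    apply Matrix.det_eq_zero_of_column_eq_zero 0
    intro a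
    refine Fin.cases ?_ ?_ a
    · simp [hT0, thL_apply, hw]
    · intro r; simp [hT0, projX_apply, hw]
  have hD : ∀ (i : Fin m) (α : Fin N), Matrix.det (Matrix.of fun a b =>
      prep (thL (ϑ q.1)) (repL i α) (T b) a) = -(w.2.1 α * ϑ q.1 i) := by
    intro i α
    rw [det_two_entries i]
    · have h00 : (Matrix.of fun a b => prep (thL (ϑ q.1)) (repL i α) (T b) a) 0 0 = 0 := by
        simp [hT0, thL_apply, hw]
      have hi0 : (Matrix.of fun a b => prep (thL (ϑ q.1)) (repL i α) (T b) a) i.succ 0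
          = w.2.1 α := by
        simp [hT0, repL_apply]
      have hsub2 : (((Matrix.of fun a b => prep (thL (ϑ q.1)) (repL i α) (T b) a)).submatrix
          i.succ.succAbove Fin.succ).det = (-1:ℝ)^(i:ℕ) * ϑ q.1 i := by
        obtain ⟨n, rfl⟩ : ∃ n, m = n + 1 := ⟨m - 1, by have := i.pos; omega⟩
        have hcol : ∀ b, thL (ϑ q.1) (V b) = ϑ q.1 b := by
          intro b
          simp [thL_apply, hV, Pi.single_apply, mul_ite, Finset.sum_ite_eq']
        apply det_top_row i (fun b => ϑ q.1 b)
        · intro b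
          simp only [Matrix.submatrix_apply, Fin.succ_succAbove_zero, Matrix.of_apply, hTs,
            prep_zero]
          exact hcol b
        · intro r b
          have hsa : i.succ.succAbove r.succ = (i.succAbove r).succ := Fin.succ_succAbove_succ i r
          simp [Matrix.submatrix_apply, hsa, hTs, repL_apply, Fin.succAbove_ne i r, hV,
            Pi.single_apply]
      rw [h00, hi0, hsub2]
      have hnp := neg_pow_succ_mul (i : ℕ)
      have hre : (-1:ℝ)^((i:ℕ)+1) * w.2.1 α * ((-1:ℝ)^(i:ℕ) * ϑ q.1 i)
          = ((-1:ℝ)^((i:ℕ)+1) * (-1:ℝ)^(i:ℕ)) * (w.2.1 α * ϑ q.1 i) := by ring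
      rw [hre, hnp]; ring
    · intro a hai
      simp [hT0, repL_apply, hai, hw]
  have hBsum : (∑ i, ∑ α, Matrix.det (Matrix.of fun a b =>
        prep (dpL i α) (repL i α) (T b) a))
      = ∑ i, ∑ α, (w.2.2 i α * (V i).2.1 α - w.2.1 α * (V i).2.2 i α) :=
    Finset.sum_congr rfl fun i _ => Finset.sum_congr rfl fun β _ => hB i β
  have hDsum : (∑ i, ∑ α, q.2.2 i α * Matrix.det (Matrix.of fun a b =>
        prep (thL (ϑ q.1)) (repL i α) (T b) a))
      = -(∑ i, ∑ α, q.2.2 i α * w.2.1 α * ϑ q.1 i) := by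
    rw [← Finset.sum_neg_distrib]
    apply Finset.sum_congr rfl; intro i _
    rw [← Finset.sum_neg_distrib]
    apply Finset.sum_congr rfl; intro β _
    rw [hD i β]; ring
  rw [hA, hC, hBsum, hDsum]
  ring


lemma altMap_sum_apply {ι : Type} (s : Finset ι) (F : ι → (Jb m N) [⋀^Fin (m+1)]→ₗ[ℝ] ℝ)
    (v : Fin (m+1) → Jb m N) : (∑ i ∈ s, F i) v = ∑ i ∈ s, F i v := by
  classical
  induction s using Finset.induction with
  | empty => simp
  | @insert a s h ih => simp [Finset.sum_insert h, ih]

def colDet {k : ℕ} (Λ : Jb m N →ₗ[ℝ] (Fin k → ℝ)) : (Jb m N) [⋀^Fin k]→ₗ[ℝ] ℝ :=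
  Matrix.detRowAlternating.compLinearMap Λ

lemma colDet_apply {k : ℕ} (Λ : Jb m N →ₗ[ℝ] (Fin k → ℝ)) (v : Fin k → Jb m N) :
    colDet Λ v = Matrix.det (Matrix.of fun a b => Λ (v b) a) := by
  have h1 : colDet Λ v = Matrix.det (Matrix.of fun a b => Λ (v a) b) := rfl
  rw [h1, ← Matrix.det_transpose]
  congr 1

def bigAlt (H : Jb m N → ℝ) (ϑ : (Fin m → ℝ) → Fin m → ℝ) (q : Jb m N) :
    (Jb m N) [⋀^Fin (m+1)]→ₗ[ℝ] ℝ :=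
  colDet (prep ((fderiv ℝ H q : Jb m N →L[ℝ] ℝ) : Jb m N →ₗ[ℝ] ℝ) (projX m N))
  - (∑ i : Fin m, ∑ α : Fin N, colDet (prep (dpL i α) (repL i α)))
  + (-(H q)) • colDet (prep (thL (ϑ q.1)) (projX m N))
  + ∑ i : Fin m, ∑ α : Fin N, (q.2.2 i α) • colDet (prep (thL (ϑ q.1)) (repL i α))

lemma bigAlt_apply (H : Jb m N → ℝ) (ϑ : (Fin m → ℝ) → Fin m → ℝ) (q : Jb m N)
    (v : Fin (m+1) → Jb m N) : bigAlt H ϑ q v = OmegaThH m N H ϑ q v := by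
  rw [omega_repr]
  unfold bigAlt
  simp only [AlternatingMap.add_apply, AlternatingMap.sub_apply, AlternatingMap.smul_apply,
    smul_eq_mul, altMap_sum_apply, colDet_apply]

/-- evaluation at `Fin.cons · V`, as a linear map. -/
def consEval (f : (Jb m N) [⋀^Fin (m+1)]→ₗ[ℝ] ℝ) (V : Fin m → Jb m N) : Jb m N →ₗ[ℝ] ℝ where
  toFun w := f (Fin.cons w V)
  map_add' a b := f.toMultilinearMap.cons_add V a b
  map_smul' c a := f.toMultilinearMap.cons_smul V c a

lemma consEval_apply (f : (Jb m N) [⋀^Fin (m+1)]→ₗ[ℝ] ℝ) (V : Fin m → Jb m N) (w : Jb m N) :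
    consEval f V w = f (Fin.cons w V) := rfl

lemma decompose (w : Jb m N) :
    w = (∑ j, w.1 j • XdirJ m N j) + (∑ α, w.2.1 α • UdirJ m N α)
      + ∑ i : Fin m, ∑ α : Fin N, w.2.2 i α • PdirJ m N i α := by
  classical
  have h1 : ∀ {n : ℕ} (a : Fin n → ℝ), (∑ j, a j • (Pi.single j 1 : Fin n → ℝ)) = a := by
    intro n a
    funext r
    simp [Finset.sum_apply, Pi.single_apply, mul_ite]
  have h2 : (∑ i : Fin m, ∑ α : Fin N,
      w.2.2 i α • (Pi.single i (Pi.single α 1) : Fin m → Fin N → ℝ)) = w.2.2 := by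
    funext i' α'
    simp [Finset.sum_apply, Pi.single_apply, apply_ite (fun (f : Fin N → ℝ) => f α'),
      mul_ite, Finset.sum_ite_eq]
  refine Prod.ext ?_ (Prod.ext ?_ ?_) <;>
    simp [XdirJ, UdirJ, PdirJ, Prod.fst_sum, Prod.snd_sum, h1, h2]

lemma fderiv_secJ (φ : (Fin m → ℝ) → Fin N → ℝ) (hφ : ContDiff ℝ (⊤ : ℕ∞) φ)
    (P : (Fin m → ℝ) → Fin m → Fin N → ℝ) (hP : ContDiff ℝ (⊤ : ℕ∞) P)
    (x y : Fin m → ℝ) :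
    fderiv ℝ (secJ m N φ P) x y = (y, fderiv ℝ φ x y, fderiv ℝ P x y) := by
  have h : HasFDerivAt (secJ m N φ P)
      ((ContinuousLinearMap.id ℝ (Fin m → ℝ)).prod
        (((fderiv ℝ φ x).prod (fderiv ℝ P x)))) x := by
    exact HasFDerivAt.prodMk (hasFDerivAt_id x)
      (((hφ.differentiable (by simp) x).hasFDerivAt).prodMk ((hP.differentiable (by simp) x).hasFDerivAt))
  rw [h.fderiv]
  rfl


lemma sum_single2 (i : Fin m) (α : Fin N) (g : Fin m → Fin N → ℝ) :
    (∑ i' : Fin m, ∑ α' : Fin N,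
      (Pi.single i (Pi.single α (1:ℝ)) : Fin m → Fin N → ℝ) i' α' * g i' α') = g i α := by
  classical
  rw [Finset.sum_eq_single i]
  · rw [Pi.single_eq_same, Finset.sum_eq_single α]
    · rw [Pi.single_eq_same, one_mul]
    · intro b _ hb; rw [Pi.single_eq_of_ne hb, zero_mul]
    · simp
  · intro b _ hb; rw [Pi.single_eq_of_ne hb]; simp
  · simp

lemma sum_single1 {n : ℕ} (α : Fin n) (g : Fin n → ℝ) :
    (∑ α' : Fin n, (Pi.single α (1:ℝ) : Fin n → ℝ) α' * g α') = g α := by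
  classical
  rw [Finset.sum_eq_single α]
  · rw [Pi.single_eq_same, one_mul]
  · intro b _ hb; rw [Pi.single_eq_of_ne hb, zero_mul]
  · simp

variable (H : Jb m N → ℝ) (ϑ : (Fin m → ℝ) → Fin m → ℝ)
  (φ : (Fin m → ℝ) → Fin N → ℝ) (P : (Fin m → ℝ) → Fin m → Fin N → ℝ)

/-- the lifted coordinate frame along the section -/
def liftE (x : Fin m → ℝ) (a : Fin m) : Jb m N :=
  (Pi.single a 1, fderiv ℝ φ x (Pi.single a 1), fderiv ℝ P x (Pi.single a 1))

def DliftL (x : Fin m → ℝ) : (Fin m → ℝ) →ₗ[ℝ] Jb m N :=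
  LinearMap.prod LinearMap.id
    (LinearMap.prod (fderiv ℝ φ x).toLinearMap (fderiv ℝ P x).toLinearMap)

lemma eval_Pdir (x : Fin m → ℝ) (i : Fin m) (α : Fin N) :
    OmegaThH m N H ϑ (secJ m N φ P x) (Fin.cons (PdirJ m N i α) (liftE φ P x))
      = fderiv ℝ H (secJ m N φ P x) (PdirJ m N i α) - fderiv ℝ φ x (Pi.single i 1) α := by
  rw [omega_eval H ϑ _ _ rfl _ (fun b => rfl)]
  simp only [PdirJ, Pi.zero_apply, zero_mul, mul_zero, sub_zero, Finset.sum_const_zero]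
  rw [sum_single2 i α (fun i' α' => (liftE φ P x i').2.1 α')]
  rfl

lemma eval_Udir (x : Fin m → ℝ) (α : Fin N) :
    OmegaThH m N H ϑ (secJ m N φ P x) (Fin.cons (UdirJ m N α) (liftE φ P x))
      = fderiv ℝ H (secJ m N φ P x) (UdirJ m N α)
        + (∑ i, fderiv ℝ P x (Pi.single i 1) i α)
        - ∑ i, P x i α * ϑ x i := by
  rw [omega_eval H ϑ _ _ rfl _ (fun b => rfl)]
  simp only [UdirJ, Pi.zero_apply, zero_mul, mul_zero, zero_sub]
  have h2 : (∑ i' : Fin m, ∑ α' : Fin N,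
        -((Pi.single α (1:ℝ) : Fin N → ℝ) α' * (liftE φ P x i').2.2 i' α'))
      = -(∑ i : Fin m, fderiv ℝ P x (Pi.single i 1) i α) := by
    rw [← Finset.sum_neg_distrib]
    apply Finset.sum_congr rfl; intro i' _
    rw [Finset.sum_neg_distrib, sum_single1 α (fun α' => (liftE φ P x i').2.2 i' α')]
    rfl
  have h3 : (∑ i' : Fin m, ∑ α' : Fin N,
        (secJ m N φ P x).2.2 i' α' * (Pi.single α (1:ℝ) : Fin N → ℝ) α'
          * ϑ (secJ m N φ P x).1 i')
      = ∑ i : Fin m, P x i α * ϑ x i := by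
    apply Finset.sum_congr rfl; intro i' _
    have : ∀ α' : Fin N, (secJ m N φ P x).2.2 i' α' * (Pi.single α (1:ℝ) : Fin N → ℝ) α'
          * ϑ (secJ m N φ P x).1 i'
        = (Pi.single α (1:ℝ) : Fin N → ℝ) α' * ((secJ m N φ P x).2.2 i' α'
          * ϑ (secJ m N φ P x).1 i') := by
      intro α'; ring
    rw [Finset.sum_congr rfl (fun α' _ => this α'),
      sum_single1 α (fun α' => (secJ m N φ P x).2.2 i' α' * ϑ (secJ m N φ P x).1 i')]
    rfl
  rw [h2, h3]
  ring

lemma vanish (hlc : lcHDWeq m N H ϑ φ P) (x : Fin m → ℝ) (w : Jb m N) :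
    bigAlt H ϑ (secJ m N φ P x) (Fin.cons w (liftE φ P x)) = 0 := by
  classical
  set q := secJ m N φ P x with hq
  set ψ := consEval (bigAlt H ϑ q) (liftE φ P x) with hψdef
  have hψ : ∀ w, ψ w = OmegaThH m N H ϑ q (Fin.cons w (liftE φ P x)) :=
    fun w => bigAlt_apply H ϑ q _
  have hPd : ∀ (i : Fin m) (α : Fin N), ψ (PdirJ m N i α) = 0 := by
    intro i α
    rw [hψ, hq, eval_Pdir H ϑ φ P x i α]
    have := hlc.1 x i α
    linarith
  have hUd : ∀ α : Fin N, ψ (UdirJ m N α) = 0 := by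
    intro α
    rw [hψ, hq, eval_Udir H ϑ φ P x α]
    have h1 := hlc.2 x α
    have h2 : (∑ i : Fin m, P x i α * ϑ x i) = ∑ i : Fin m, ϑ x i * P x i α :=
      Finset.sum_congr rfl fun i _ => by ring
    rw [h2]
    linarith
  have hXd : ∀ j : Fin m, ψ (XdirJ m N j) = 0 := by
    intro j
    have hz : ψ (liftE φ P x j) = 0 := by
      show bigAlt H ϑ q (Fin.cons (liftE φ P x j) (liftE φ P x)) = 0
      refine AlternatingMap.map_eq_zero_of_eq _ _
        (?_ : (Fin.cons (liftE φ P x j) (liftE φ P x) : Fin (m+1) → Jb m N) 0 = _)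
        (Ne.symm (Fin.succ_ne_zero j))
      rw [Fin.cons_zero, Fin.cons_succ]
    have hdec := decompose (liftE φ P x j)
    have hxsum : (∑ r, (liftE φ P x j).1 r • XdirJ m N r) = XdirJ m N j := by
      show (∑ r, (Pi.single j (1:ℝ) : Fin m → ℝ) r • XdirJ m N r) = XdirJ m N j
      rw [Finset.sum_eq_single j]
      · rw [Pi.single_eq_same, one_smul]
      · intro b _ hb; rw [Pi.single_eq_of_ne hb, zero_smul]
      · simp
    rw [hxsum] at hdec
    have hz2 := hz
    rw [hdec] at hz2
    simp only [map_add, map_sum, map_smul, smul_eq_mul, hUd, hPd, mul_zero,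
      Finset.sum_const_zero, add_zero, zero_add] at hz2
    exact hz2
  show ψ w = 0
  rw [decompose w]
  simp only [map_add, map_sum, map_smul, smul_eq_mul, hXd, hUd, hPd, mul_zero,
    Finset.sum_const_zero, add_zero, zero_add]

end LCHDW

/-- Coordinate locally conformal Hamilton–De Donder–Weyl theorem: for a closed 1-form
`θ = ϑ_i(x)dxⁱ` and `(Ω_θ)_h = Ω_h + θ∧Θ_h`, a smooth section
`φ(x) = (xⁱ, φ^α(x), φⁱ_α(x))` of `J¹π* → ℝ^m` satisfies `φ*(ι_X (Ω_θ)_h) = 0` for every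
smooth vector field `X` on `J¹π*` if and only if it satisfies the locally conformal HDW
equations `∂φ^α/∂xⁱ = (∂H/∂pⁱ_α)∘φ` and `∑ᵢ ∂φⁱ_α/∂xⁱ = −(∂H/∂u^α)∘φ + ϑ_i φⁱ_α`. -/
theorem lcHDW_iff_pullback_contractions_vanish (m N : ℕ)
    (H : Jb m N → ℝ) (hH : ContDiff ℝ (⊤ : ℕ∞) H)
    (ϑ : (Fin m → ℝ) → Fin m → ℝ) (hϑ : ContDiff ℝ (⊤ : ℕ∞) ϑ)
    (hϑclosed : ClosedOneForm m ϑ)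
    (φ : (Fin m → ℝ) → Fin N → ℝ) (hφ : ContDiff ℝ (⊤ : ℕ∞) φ)
    (P : (Fin m → ℝ) → Fin m → Fin N → ℝ) (hP : ContDiff ℝ (⊤ : ℕ∞) P) :
    (∀ X : Jb m N → Jb m N, ContDiff ℝ (⊤ : ℕ∞) X →
      ∀ (x : Fin m → ℝ) (v : Fin m → Fin m → ℝ),
        pullC (secJ m N φ P) (iotaV X (OmegaThH m N H ϑ)) x v = 0) ↔
    lcHDWeq m N H ϑ φ P := by
  classical
  constructor
  · intro h
    have key : ∀ (x : Fin m → ℝ) (w : Jb m N),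
        OmegaThH m N H ϑ (secJ m N φ P x) (Fin.cons w (LCHDW.liftE φ P x)) = 0 := by
      intro x w
      have hh := h (fun _ => w) contDiff_const x (fun a : Fin m => (Pi.single a 1 : Fin m → ℝ))
      unfold pullC iotaV at hh
      have harg : (fun a => fderiv ℝ (secJ m N φ P) x ((fun a : Fin m => (Pi.single a 1 : Fin m → ℝ)) a))
          = LCHDW.liftE φ P x := by
        funext a
        rw [LCHDW.fderiv_secJ φ hφ P hP]
        rfl
      rw [harg] at hh
      exact hh
    refine ⟨?_, ?_⟩
    · intro x i α
      have hk := key x (PdirJ m N i α)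
      rw [LCHDW.eval_Pdir H ϑ φ P x i α] at hk
      linarith
    · intro x α
      have hk := key x (UdirJ m N α)
      rw [LCHDW.eval_Udir H ϑ φ P x α] at hk
      have h2 : (∑ i : Fin m, P x i α * ϑ x i) = ∑ i : Fin m, ϑ x i * P x i α :=
        Finset.sum_congr rfl fun i _ => by ring
      rw [h2] at hk
      linarith
  · intro hlc X hX x v
    unfold pullC iotaV
    rw [← LCHDW.bigAlt_apply]
    have harg : (fun a => fderiv ℝ (secJ m N φ P) x (v a))
        = fun a => LCHDW.DliftL φ P x (v a) := by
      funext a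
      rw [LCHDW.fderiv_secJ φ hφ P hP]
      rfl
    rw [harg]
    set q := secJ m N φ P x with hq
    set g : AlternatingMap ℝ (Fin m → ℝ) ℝ (Fin m) :=
      ((LCHDW.bigAlt H ϑ q).curryLeft (X q)).compLinearMap (LCHDW.DliftL φ P x) with hg
    have hgv : ∀ u : Fin m → Fin m → ℝ,
        g u = LCHDW.bigAlt H ϑ q (Fin.cons (X q) (fun a => LCHDW.DliftL φ P x (u a))) := by
      intro u
      rw [hg, AlternatingMap.compLinearMap_apply]
      rfl
    have hbas : g ⇑(Pi.basisFun ℝ (Fin m)) = 0 := by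
      rw [hgv]
      have hE : (fun a => LCHDW.DliftL φ P x ((Pi.basisFun ℝ (Fin m)) a))
          = LCHDW.liftE φ P x := by
        funext a
        rw [Pi.basisFun_apply]
        rfl
      rw [hE, hq]
      exact LCHDW.vanish H ϑ φ P hlc x (X q)
    rw [← hgv v, AlternatingMap.eq_smul_basis_det (Pi.basisFun ℝ (Fin m)) g,
      AlternatingMap.smul_apply, hbas]
    simp
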